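/- Let X be a zigzag poset, ι : X' ↪ X the inclusion of the alternating subposet, and F a sheaf of vector spaces on X. Then the induced map in sheaf cohomology H^k(ι) : H^k(X, F) → H^k(X', ι*F) is an isomorphism for all k ≥ 0. -/

import Mathlib

open CategoryTheory

/-! Zigzag posets.  A zigzag poset is a finite poset whose Hasse diagram is a path
`x_0 — x_1 — ... — x_n` with arbitrarily oriented edges.  We encode the orientation
of the edge between `x_l` and `x_{l+1}` by `o l : Bool` (`true` means `x_l < x_{l+1}`),
and `x_i ≤ x_j` iff all the edges between them point from `x_i` towards `x_j`. -/

/-- The order relation of the zigzag poset with edge orientations `o`. -/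
def zigzagLE (o : ℕ → Bool) (i j : ℕ) : Prop :=
  (i ≤ j ∧ ∀ l, i ≤ l → l < j → o l = true) ∨
  (j ≤ i ∧ ∀ l, j ≤ l → l < i → o l = false)

theorem zigzagLE_refl (o : ℕ → Bool) (i : ℕ) : zigzagLE o i i :=
  Or.inl ⟨le_rfl, fun _ h1 h2 => absurd (lt_of_le_of_lt h1 h2) (lt_irrefl _)⟩

theorem zigzagLE_trans (o : ℕ → Bool) (i j l : ℕ)
    (h1 : zigzagLE o i j) (h2 : zigzagLE o j l) : zigzagLE o i l := by
  rcases h1 with ⟨hij, hup1⟩ | ⟨hji, hdn1⟩ <;> rcases h2 with ⟨hjl, hup2⟩ | ⟨hlj, hdn2⟩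
  · refine Or.inl ⟨le_trans hij hjl, fun m hm1 hm2 => ?_⟩
    rcases Nat.lt_or_ge m j with h | h
    · exact hup1 m hm1 h
    · exact hup2 m h hm2
  · rcases le_or_gt i l with h | h
    · exact Or.inl ⟨h, fun m hm1 hm2 => hup1 m hm1 (lt_of_lt_of_le hm2 hlj)⟩
    · exact Or.inr ⟨le_of_lt h, fun m hm1 hm2 => hdn2 m hm1 (lt_of_lt_of_le hm2 hij)⟩
  · rcases le_or_gt i l with h | h
    · exact Or.inl ⟨h, fun m hm1 hm2 => hup2 m (le_trans hji hm1) hm2⟩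
    · exact Or.inr ⟨le_of_lt h, fun m hm1 hm2 => hdn1 m (le_trans hjl hm1) hm2⟩
  · refine Or.inr ⟨le_trans hlj hji, fun m hm1 hm2 => ?_⟩
    rcases Nat.lt_or_ge m j with h | h
    · exact hdn2 m hm1 h
    · exact hdn1 m h hm2

theorem zigzagLE_antisymm (o : ℕ → Bool) (i j : ℕ)
    (h1 : zigzagLE o i j) (h2 : zigzagLE o j i) : i = j := by
  rcases h1 with ⟨hij, hup1⟩ | ⟨hji, hdn1⟩ <;>
    rcases h2 with ⟨hji', hup2⟩ | ⟨hij', hdn2⟩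
  · omega
  · rcases Nat.lt_or_ge i j with h | h
    · have ht := hup1 i le_rfl h
      have hf := hdn2 i le_rfl h
      simp [ht] at hf
    · omega
  · rcases Nat.lt_or_ge j i with h | h
    · have ht := hup2 j le_rfl h
      have hf := hdn1 j le_rfl h
      simp [ht] at hf
    · omega
  · omega

/-- The zigzag poset on `{x_0, ..., x_n}` with edge orientations `o`. -/
def Zigzag (n : ℕ) (o : ℕ → Bool) : Type := Fin (n + 1)

instance (n : ℕ) (o : ℕ → Bool) : PartialOrder (Zigzag n o) where
  le i j := zigzagLE o (Fin.val i) (Fin.val j)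
  le_refl i := zigzagLE_refl o _
  le_trans i j l := zigzagLE_trans o _ _ _
  le_antisymm i j h1 h2 := Fin.ext (zigzagLE_antisymm o _ _ h1 h2)

/-- The index of a point of the zigzag poset. -/
def Zigzag.idx {n : ℕ} {o : ℕ → Bool} (x : Zigzag n o) : ℕ := Fin.val x

/-- The alternating subposet `X' ⊆ X`: all minimal elements together with the
internal maximal elements (the maximal elements flanked by minimal elements on
both sides); this is the alternating sequence of minimal and internal maximal
elements of the zigzag. -/
def altSet (n : ℕ) (o : ℕ → Bool) : Set (Zigzag n o) :=
  {x | IsMin x ∨ (IsMax x ∧ (∃ y : Zigzag n o, IsMin y ∧ y.idx < x.idx) ∧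
    (∃ y : Zigzag n o, IsMin y ∧ x.idx < y.idx))}

/-- The alternating subposet, with the induced order. -/
def AltSub (n : ℕ) (o : ℕ → Bool) : Type := {x : Zigzag n o // x ∈ altSet n o}

instance (n : ℕ) (o : ℕ → Bool) : PartialOrder (AltSub n o) :=
  inferInstanceAs (PartialOrder {x : Zigzag n o // x ∈ altSet n o})

/-- The inclusion `ι : X' ↪ X` is order preserving. -/
lemma altIncl_monotone (n : ℕ) (o : ℕ → Bool) :
    Monotone (fun x : AltSub n o => (x.val : Zigzag n o)) := fun _ _ h => h

/-- The restriction (pullback) functor `ι*` of sheaves along the inclusion of the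
alternating subposet. -/
noncomputable def restrictAlt (n : ℕ) (o : ℕ → Bool) (C : Type*) [Category C] :
    (Zigzag n o ⥤ C) ⥤ (AltSub n o ⥤ C) :=
  (Functor.whiskeringLeft (AltSub n o) (Zigzag n o) C).obj (altIncl_monotone n o).functor

open CategoryTheory.Limits

/-! ### Auxiliary combinatorics: the greatest alternating element below a point -/

namespace ZigzagAux

variable {n : ℕ} {o : ℕ → Bool}

local instance : Finite (Zigzag n o) := inferInstanceAs (Finite (Fin (n + 1)))

lemma le_iff {a b : Zigzag n o} : a ≤ b ↔ zigzagLE o (Fin.val a) (Fin.val b) := Iff.rfl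

lemma isMin_o_left {a : Zigzag n o} (h : IsMin a) (ha : 0 < Fin.val a) :
    o (Fin.val a - 1) = false := by
  by_contra hb
  have hb' : o (Fin.val a - 1) = true := by
    cases hob : o (Fin.val a - 1) <;> simp [hob] at hb ⊢
  have hlt : Fin.val a - 1 < n + 1 := by have := a.isLt; omega
  have hba : zigzagLE o (Fin.val a - 1) (Fin.val a) :=
    Or.inl ⟨by omega, fun l h1 h2 => by
      have hl : l = Fin.val a - 1 := by omega
      rwa [hl]⟩
  have hab : zigzagLE o (Fin.val a) (Fin.val a - 1) := h (b := ⟨Fin.val a - 1, hlt⟩) hba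
  have := zigzagLE_antisymm o _ _ hab hba
  omega

lemma isMin_o_right {a : Zigzag n o} (h : IsMin a) (ha : Fin.val a < n) :
    o (Fin.val a) = true := by
  by_contra hb
  have hb' : o (Fin.val a) = false := by
    cases hob : o (Fin.val a) <;> simp [hob] at hb ⊢
  have hlt : Fin.val a + 1 < n + 1 := by omega
  have hba : zigzagLE o (Fin.val a + 1) (Fin.val a) :=
    Or.inr ⟨by omega, fun l h1 h2 => by
      have hl : l = Fin.val a := by omega
      rwa [hl]⟩
  have hab : zigzagLE o (Fin.val a) (Fin.val a + 1) := h (b := ⟨Fin.val a + 1, hlt⟩) hba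
  have := zigzagLE_antisymm o _ _ hab hba
  omega

lemma mem_altSet_of_two_min {a b x : Zigzag n o} (ha : IsMin a) (hb : IsMin b)
    (hax : a ≤ x) (hbx : b ≤ x) (hab : Fin.val a < Fin.val b) : x ∈ altSet n o := by
  have hbn : Fin.val b < n + 1 := b.isLt
  rcases le_iff.mp hax with ⟨h1, hup⟩ | ⟨h1, hdn⟩
  · rcases le_iff.mp hbx with ⟨h2, hup2⟩ | ⟨h2, hdn2⟩
    · -- both minima lie to the left of x
      have h3 := hup (Fin.val b - 1) (by omega) (by omega)
      have h4 := isMin_o_left hb (by omega)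
      simp [h3] at h4
    · -- a to the left, b to the right: x is an internal maximum
      rcases Nat.eq_or_lt_of_le h1 with hti | hti
      · exfalso
        have h3 := hdn2 (Fin.val x) le_rfl (by omega)
        have h4 := isMin_o_right ha (by omega)
        rw [← hti] at h3
        simp [h3] at h4
      · rcases Nat.eq_or_lt_of_le h2 with htj | htj
        · exfalso
          have h3 := hup (Fin.val x - 1) (by omega) (by omega)
          have h4 := isMin_o_left hb (by omega)
          rw [htj] at h3
          simp [h3] at h4
        · refine Or.inr ⟨?_, ⟨a, ha, hti⟩, ⟨b, hb, htj⟩⟩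
          intro z hz
          have hzx : Fin.val z = Fin.val x := by
            rcases le_iff.mp hz with ⟨h3, hup3⟩ | ⟨h3, hdn3⟩
            · by_contra hne
              have h5 := hup3 (Fin.val x) le_rfl (by omega)
              have h6 := hdn2 (Fin.val x) le_rfl (by omega)
              simp [h5] at h6
            · by_contra hne
              have h5 := hdn3 (Fin.val x - 1) (by omega) (by omega)
              have h6 := hup (Fin.val x - 1) (by omega) (by omega)
              simp [h6] at h5
          exact le_of_eq (Fin.ext hzx)
  · rcases le_iff.mp hbx with ⟨h2, hup2⟩ | ⟨h2, hdn2⟩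
    · omega
    · have h3 := hdn2 (Fin.val a) (by omega) (by omega)
      have h4 := isMin_o_right ha (by omega)
      simp [h3] at h4

lemma isMax_le_eq {y x : Zigzag n o} (hy : IsMax y) (h : y ≤ x) : y = x :=
  le_antisymm h (hy h)

lemma exists_min_le (x : Zigzag n o) : ∃ a : Zigzag n o, IsMin a ∧ a ≤ x := by
  obtain ⟨b, hba, hmin⟩ :=
    exists_minimal_le_of_wellFoundedLT (fun _ : Zigzag n o => True) x trivial
  exact ⟨b, fun c hc => hmin.2 trivial hc, hba⟩

lemma exists_greatest (n : ℕ) (o : ℕ → Bool) (x : Zigzag n o) :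
    ∃ m : AltSub n o, m.val ≤ x ∧ ∀ y : AltSub n o, y.val ≤ x → y.val ≤ m.val := by
  by_cases hx : x ∈ altSet n o
  · exact ⟨⟨x, hx⟩, le_rfl, fun y hy => hy⟩
  · obtain ⟨a, ha, hax⟩ := exists_min_le x
    refine ⟨⟨a, Or.inl ha⟩, hax, ?_⟩
    intro y hyx
    rcases y.2 with hymin | ⟨hymax, -, -⟩
    · rcases lt_trichotomy (Fin.val y.1) (Fin.val a) with h | h | h
      · exact absurd (mem_altSet_of_two_min hymin ha hyx hax h) hx
      · exact le_of_eq (Fin.ext h)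
      · exact absurd (mem_altSet_of_two_min ha hymin hax hyx h) hx
    · exact absurd (isMax_le_eq hymax hyx ▸ y.2) hx

/-- The greatest element of the alternating subposet below a given point. -/
noncomputable def altRet (n : ℕ) (o : ℕ → Bool) (x : Zigzag n o) : AltSub n o :=
  (exists_greatest n o x).choose

lemma altGC (n : ℕ) (o : ℕ → Bool) :
    GaloisConnection (fun x : AltSub n o => (x.val : Zigzag n o)) (altRet n o) := by
  intro y x
  constructor
  · intro h
    exact (exists_greatest n o x).choose_spec.2 y h
  · intro h
    exact le_trans h (exists_greatest n o x).choose_spec.1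

end ZigzagAux

/-- Let `X` be a zigzag poset, `ι : X' ↪ X` the inclusion of the
alternating subposet, and `F` a sheaf of vector spaces on `X`.  Then the induced map
in sheaf cohomology (right derived functors of the limit functor)
`H^j(X, F) → H^j(X', ι*F)` is an isomorphism for all `j ≥ 0`. -/
theorem cohomology_zigzag_alt_iso_aux.{u} (k : Type) [Field k] (n : ℕ) (o : ℕ → Bool)
    [(lim : (Zigzag n o ⥤ ModuleCat.{u} k) ⥤ ModuleCat.{u} k).Additive]
    [(lim : (AltSub n o ⥤ ModuleCat.{u} k) ⥤ ModuleCat.{u} k).Additive]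
    [HasInjectiveResolutions (Zigzag n o ⥤ ModuleCat.{u} k)]
    [HasInjectiveResolutions (AltSub n o ⥤ ModuleCat.{u} k)]
    (F : Zigzag n o ⥤ ModuleCat.{u} k) (j : ℕ) :
    Nonempty ((((lim : (Zigzag n o ⥤ ModuleCat.{u} k) ⥤ ModuleCat.{u} k).rightDerived j).obj F) ≅
      (((lim : (AltSub n o ⥤ ModuleCat.{u} k) ⥤ ModuleCat.{u} k).rightDerived j).obj
        ((restrictAlt n o (ModuleCat.{u} k)).obj F))) := by
  classical
  -- the right adjoint (on posets) of the inclusion of the alternating subposet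
  have gc := ZigzagAux.altGC n o
  -- the adjunction `ι ⊣ g` between the posets
  have adj0 : (altIncl_monotone n o).functor ⊣ gc.monotone_u.functor := gc.adjunction
  -- whiskering: `g* ⊣ ι*`
  have adjW :
      (Functor.whiskeringLeft (Zigzag n o) (AltSub n o) (ModuleCat.{u} k)).obj gc.monotone_u.functor ⊣
        restrictAlt n o (ModuleCat.{u} k) := adj0.whiskerLeft (ModuleCat.{u} k)
  haveI : (restrictAlt n o (ModuleCat.{u} k)).Additive := { map_add := by intros; rfl }
  haveI : PreservesFiniteLimits (restrictAlt n o (ModuleCat.{u} k)) :=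
    ⟨fun J _ _ => whiskeringLeft_preservesLimitsOfShape J (altIncl_monotone n o).functor⟩
  haveI : PreservesFiniteColimits (restrictAlt n o (ModuleCat.{u} k)) :=
    ⟨fun J _ _ => inferInstanceAs (PreservesColimitsOfShape J
      ((Functor.whiskeringLeft (AltSub n o) (Zigzag n o) (ModuleCat.{u} k)).obj
        (altIncl_monotone n o).functor))⟩
  haveI : (restrictAlt n o (ModuleCat.{u} k)).PreservesHomology :=
    Functor.preservesHomologyOfExact _
  -- an injective resolution of `F`
  obtain ⟨I⟩ := (inferInstance : HasInjectiveResolution F).out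
  -- its restriction is an injective resolution of `ι* F`
  let J : InjectiveResolution ((restrictAlt n o (ModuleCat.{u} k)).obj F) :=
    { cocomplex := ((restrictAlt n o (ModuleCat.{u} k)).mapHomologicalComplex
        (ComplexShape.up ℕ)).obj I.cocomplex
      injective := fun m => adjW.map_injective (I.cocomplex.X m) (I.injective m)
      ι := (HomologicalComplex.singleMapHomologicalComplex (restrictAlt n o (ModuleCat.{u} k))
          (ComplexShape.up ℕ) 0).inv.app F ≫
        ((restrictAlt n o (ModuleCat.{u} k)).mapHomologicalComplex (ComplexShape.up ℕ)).map I.ι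
      quasiIso := by
        haveI : QuasiIso (((restrictAlt n o (ModuleCat.{u} k)).mapHomologicalComplex
            (ComplexShape.up ℕ)).map I.ι) :=
          HomologicalComplex.quasiIso_map_of_preservesHomology _ _
        infer_instance }
  -- `lim_X ≅ ι* ⋙ lim_{X'}` by uniqueness of right adjoints
  let adjC := (Limits.constLimAdj (J := AltSub n o) (C := ModuleCat.{u} k)).comp adjW
  let e0 : (Functor.const (AltSub n o) : ModuleCat.{u} k ⥤ _) ⋙
      (Functor.whiskeringLeft (Zigzag n o) (AltSub n o) (ModuleCat.{u} k)).obj gc.monotone_u.functor ≅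
      (Functor.const (Zigzag n o) : ModuleCat.{u} k ⥤ _) :=
    NatIso.ofComponents
      (fun v => NatIso.ofComponents (fun x => Iso.refl _) (by intros; simp; rfl))
      (by intros; ext; simp)
  let adj2 : (Functor.const (Zigzag n o) : ModuleCat.{u} k ⥤ _) ⊣
      restrictAlt n o (ModuleCat.{u} k) ⋙ (lim : (AltSub n o ⥤ ModuleCat.{u} k) ⥤ ModuleCat.{u} k) :=
    adjC.ofNatIsoLeft e0
  let η : (lim : (Zigzag n o ⥤ ModuleCat.{u} k) ⥤ ModuleCat.{u} k) ≅
      restrictAlt n o (ModuleCat.{u} k) ⋙ (lim : (AltSub n o ⥤ ModuleCat.{u} k) ⥤ ModuleCat.{u} k) :=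
    Adjunction.rightAdjointUniq Limits.constLimAdj adj2
  -- comparison of the complexes computing the two derived functors
  let cI : (((lim : (Zigzag n o ⥤ ModuleCat.{u} k) ⥤ ModuleCat.{u} k).mapHomologicalComplex
        (ComplexShape.up ℕ)).obj I.cocomplex) ≅
      (((lim : (AltSub n o ⥤ ModuleCat.{u} k) ⥤ ModuleCat.{u} k).mapHomologicalComplex
        (ComplexShape.up ℕ)).obj J.cocomplex) :=
    HomologicalComplex.Hom.isoOfComponents (fun m => η.app (I.cocomplex.X m))
      (fun i j _ => (η.hom.naturality (I.cocomplex.d i j)).symm)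
  exact ⟨I.isoRightDerivedObj (lim : (Zigzag n o ⥤ ModuleCat.{u} k) ⥤ ModuleCat.{u} k) j ≪≫
    (HomologicalComplex.homologyFunctor (ModuleCat.{u} k) (ComplexShape.up ℕ) j).mapIso cI ≪≫
    (J.isoRightDerivedObj (lim : (AltSub n o ⥤ ModuleCat.{u} k) ⥤ ModuleCat.{u} k) j).symm⟩

theorem cohomology_zigzag_alt_iso (k : Type) [Field k] (n : ℕ) (o : ℕ → Bool)
    [(lim : (Zigzag n o ⥤ ModuleCat.{0} k) ⥤ ModuleCat.{0} k).Additive]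
    [(lim : (AltSub n o ⥤ ModuleCat.{0} k) ⥤ ModuleCat.{0} k).Additive]
    [HasInjectiveResolutions (Zigzag n o ⥤ ModuleCat.{0} k)]
    [HasInjectiveResolutions (AltSub n o ⥤ ModuleCat.{0} k)]
    (F : Zigzag n o ⥤ ModuleCat.{0} k) (j : ℕ) :
    Nonempty ((((lim : (Zigzag n o ⥤ ModuleCat.{0} k) ⥤ ModuleCat.{0} k).rightDerived j).obj F) ≅
      (((lim : (AltSub n o ⥤ ModuleCat.{0} k) ⥤ ModuleCat.{0} k).rightDerived j).obj
        ((restrictAlt n o (ModuleCat.{0} k)).obj F))) :=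
  cohomology_zigzag_alt_iso_aux k n o F j
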